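/- The bracket relations [L_α, L_β] = (β−α)L_{α+β} + δ_{α+β,0}(α³−α)/12·C, [L_α, W_β] = (β−α)W_{α+β} + δ_{α+β,0}(α³−α)/12·C, [W_α, W_β] = 0, [·, C] = 0, for α, β ∈ ℤᵏ (viewed as a subgroup of ℂ), satisfy the Jacobi identity and skew-symmetry, hence define a Lie algebra structure on the vector space with basis {L_α, W_α : α ∈ ℤᵏ} ∪ {C}. -/

import Mathlib

/-- Basis index set for the high rank `W`-algebra `W(2,2)`:
`L_α`, `W_α` for `α ∈ ℤᵏ`, and the central element `C`. -/
abbrev WIdx (k : ℕ) := ((Fin k → ℤ) ⊕ (Fin k → ℤ)) ⊕ Unit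

/-- The underlying vector space with basis `{L_α, W_α : α ∈ ℤᵏ} ∪ {C}`. -/
abbrev WAlg (k : ℕ) := WIdx k →₀ ℂ

noncomputable def Lb {k : ℕ} (α : Fin k → ℤ) : WAlg k :=
  Finsupp.single (Sum.inl (Sum.inl α)) 1

noncomputable def Wb {k : ℕ} (α : Fin k → ℤ) : WAlg k :=
  Finsupp.single (Sum.inl (Sum.inr α)) 1

noncomputable def Cb {k : ℕ} : WAlg k := Finsupp.single (Sum.inr ()) 1


noncomputable def fmat {k : ℕ} (ε : (Fin k → ℤ) →+ ℂ) : WIdx k → WIdx k → WAlg k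
  | .inl (.inl α), .inl (.inl β) =>
      (ε β - ε α) • Lb (α + β) + (if α + β = 0 then ((ε α) ^ 3 - ε α) / 12 else 0) • Cb
  | .inl (.inl α), .inl (.inr β) =>
      (ε β - ε α) • Wb (α + β) + (if α + β = 0 then ((ε α) ^ 3 - ε α) / 12 else 0) • Cb
  | .inl (.inr α), .inl (.inl β) =>
      -((ε α - ε β) • Wb (β + α) + (if β + α = 0 then ((ε β) ^ 3 - ε β) / 12 else 0) • Cb)
  | _, _ => 0

noncomputable def Bmap {k : ℕ} (ε : (Fin k → ℤ) →+ ℂ) : WAlg k →ₗ[ℂ] WAlg k →ₗ[ℂ] WAlg k :=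
  Finsupp.lsum ℂ fun i => LinearMap.toSpanSingleton ℂ _
    (Finsupp.lsum ℂ fun j => LinearMap.toSpanSingleton ℂ _ (fmat ε i j))

lemma Bsingle {k : ℕ} (ε : (Fin k → ℤ) →+ ℂ) (i j : WIdx k) (a b : ℂ) :
    Bmap ε (Finsupp.single i a) (Finsupp.single j b) = a • b • fmat ε i j := by
  simp [Bmap]

lemma BCb {k : ℕ} (ε : (Fin k → ℤ) →+ ℂ) (x : WAlg k) : Bmap ε x Cb = 0 := by
  have : (Bmap ε).flip Cb = 0 := by
    ext i a
    rcases i with (α | α) | ⟨⟩ <;>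
    simp [Cb, Bsingle, fmat]
  simpa using congrFun (congrArg DFunLike.coe this) x

lemma fskew {k : ℕ} (ε : (Fin k → ℤ) →+ ℂ) (i j : WIdx k) : fmat ε i j = - fmat ε j i := by
  rcases i with (α | α) | ⟨⟩ <;> rcases j with (β | β) | ⟨⟩ <;> simp [fmat]
  · by_cases h : α + β = 0
    · have hβ : β = -α := eq_neg_of_add_eq_zero_right h
      have h' : β + α = 0 := by rw [add_comm]; exact h
      subst hβ
      simp only [h, h', if_pos, map_neg, add_comm (-α) α, h]
      module
    · have h' : ¬ β + α = 0 := by rwa [add_comm]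
      simp [h, h', add_comm β α]
      module

lemma Bskew {k : ℕ} (ε : (Fin k → ℤ) →+ ℂ) (x y : WAlg k) : Bmap ε x y = - Bmap ε y x := by
  rw [eq_neg_iff_add_eq_zero]
  induction x using Finsupp.induction_linear generalizing y with
  | zero => simp
  | add x x' hx hx' =>
    simp only [map_add, LinearMap.add_apply]
    have h := congrArg₂ (· + ·) (hx y) (hx' y)
    simp only [add_zero] at h
    abel_nf at h ⊢
    exact h
  | single i a =>
    induction y using Finsupp.induction_linear with
    | zero => simp
    | add y y' hy hy' =>
      simp only [map_add, LinearMap.add_apply]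
      have h := congrArg₂ (· + ·) hy hy'
      simp only [add_zero] at h
      abel_nf at h ⊢
      exact h
    | single j b =>
      rw [Bsingle, Bsingle, fskew ε i j]
      rw [smul_comm b a]
      simp

set_option maxHeartbeats 1000000 in
lemma jac_single {k : ℕ} (ε : (Fin k → ℤ) →+ ℂ) (i j l : WIdx k) (a b c : ℂ) :
    Bmap ε (Finsupp.single i a) (Bmap ε (Finsupp.single j b) (Finsupp.single l c))
      + Bmap ε (Finsupp.single j b) (Bmap ε (Finsupp.single l c) (Finsupp.single i a))
      + Bmap ε (Finsupp.single l c) (Bmap ε (Finsupp.single i a) (Finsupp.single j b)) = 0 := by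
  rcases i with (α | α) | ⟨⟩ <;> rcases j with (β | β) | ⟨⟩ <;> rcases l with (γ | γ) | ⟨⟩ <;>
    simp only [Bsingle, fmat, Lb, Wb, Cb, map_add, map_smul, map_neg, map_zero,
      smul_add, smul_neg, smul_zero, smul_smul, mul_one, one_smul, zero_smul, add_zero,
      zero_add, neg_zero, neg_neg, mul_zero, zero_mul, neg_add_rev, map_add ε] <;>
    try rfl
  all_goals (
    simp only [show β + (γ + α) = α + (β + γ) from by abel,
               show γ + (α + β) = α + (β + γ) from by abel,
               show β + (α + γ) = α + (β + γ) from by abel,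
               show (α + β) + γ = α + (β + γ) from by abel,
               show (γ + α) + β = α + (β + γ) from by abel,
               show α + (γ + β) = α + (β + γ) from by abel,
               show (β + γ) + α = α + (β + γ) from by abel,
               show γ + (β + α) = α + (β + γ) from by abel]
    by_cases h : α + (β + γ) = 0
    · have hc : ε γ = -ε α - ε β := by
        have h2 := congrArg ε h
        simp only [map_add, map_zero] at h2
        linear_combination h2
      simp only [if_pos h, hc]
      module
    · simp only [if_neg h]
      module)

lemma Bjac {k : ℕ} (ε : (Fin k → ℤ) →+ ℂ) (x y z : WAlg k) :
    Bmap ε x (Bmap ε y z) + Bmap ε y (Bmap ε z x) + Bmap ε z (Bmap ε x y) = 0 := by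
  induction x using Finsupp.induction_linear generalizing y z with
  | zero => simp
  | add x x' hx hx' =>
    simp only [map_add, LinearMap.add_apply]
    have h := congrArg₂ (· + ·) (hx y z) (hx' y z)
    simp only [add_zero] at h
    abel_nf at h ⊢
    exact h
  | single i a =>
    induction y using Finsupp.induction_linear generalizing z with
    | zero => simp
    | add y y' hy hy' =>
      simp only [map_add, LinearMap.add_apply]
      have h := congrArg₂ (· + ·) (hy z) (hy' z)
      simp only [add_zero] at h
      abel_nf at h ⊢
      exact h
    | single j b =>
      induction z using Finsupp.induction_linear with
      | zero => simp
      | add z z' hz hz' =>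
        simp only [map_add, LinearMap.add_apply]
        have h := congrArg₂ (· + ·) hz hz'
        simp only [add_zero] at h
        abel_nf at h ⊢
        exact h
      | single l c => exact jac_single ε i j l a b c

/-- the bracket relations of the high rank `W`-algebra `W(2,2)` extend to a
bilinear bracket on the free vector space on `{L_α, W_α : α ∈ ℤᵏ} ∪ {C}` which is
skew-symmetric and satisfies the Jacobi identity, hence defines a Lie algebra structure.
Here `ε : ℤᵏ →+ ℂ` is the embedding of `ℤᵏ` as a subgroup of `ℂ` (given by a `ℤ`-basis
`ε₁,…,ε_k` of complex numbers linearly independent over `ℚ`, so `ε` is injective). -/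
theorem stmt0 (k : ℕ) (hk : 0 < k) (ε : (Fin k → ℤ) →+ ℂ)
    (hε : Function.Injective ε) :
    ∃ B : WAlg k →ₗ[ℂ] WAlg k →ₗ[ℂ] WAlg k,
      (∀ α β : Fin k → ℤ, B (Lb α) (Lb β)
          = (ε β - ε α) • Lb (α + β)
            + (if α + β = 0 then ((ε α) ^ 3 - ε α) / 12 else 0) • Cb) ∧
      (∀ α β : Fin k → ℤ, B (Lb α) (Wb β)
          = (ε β - ε α) • Wb (α + β)
            + (if α + β = 0 then ((ε α) ^ 3 - ε α) / 12 else 0) • Cb) ∧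
      (∀ α β : Fin k → ℤ, B (Wb α) (Wb β) = 0) ∧
      (∀ x : WAlg k, B x Cb = 0) ∧
      (∀ x y : WAlg k, B x y = - B y x) ∧
      (∀ x y z : WAlg k, B x (B y z) + B y (B z x) + B z (B x y) = 0) := by
  refine ⟨Bmap ε, fun α β => ?_, fun α β => ?_, fun α β => ?_, BCb ε, Bskew ε, Bjac ε⟩
  · rw [Lb, Lb, Bsingle, one_smul, one_smul]; rfl
  · rw [Lb, Wb, Bsingle, one_smul, one_smul]; rfl
  · rw [Wb, Wb, Bsingle, one_smul, one_smul]; rfl
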